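/- Let (F,G) be a generating pair on an open set Ω ⊆ 𝔻, let φ, ψ : Ω → ℝ be continuously differentiable, and set w = φF + ψG. Then w satisfies the hyperbolic Vekua equation w_z̄ = a_(F,G)w + b_(F,G)w̄ on Ω if and only if φ_z̄·F + ψ_z̄·G = 0 on Ω, where for a real function φ, φ_z̄ = ½(φ_x − jφ_t). -/

import Mathlib

noncomputable section

open Filter Topology MeasureTheory

/-- Hyperbolic (duplex) numbers 𝔻, modeled as pairs `(Re z, Im z)` with `j ^ 2 = 1`. -/
abbrev Hyp : Type := ℝ × ℝ

/-- Real part of a hyperbolic number. -/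
def hre (a : Hyp) : ℝ := a.1

/-- Imaginary part of a hyperbolic number. -/
def him (a : Hyp) : ℝ := a.2

/-- The hyperbolic imaginary unit `j`. -/
def hj : Hyp := (0, 1)

/-- Hyperbolic multiplication: `(x+tj)(x'+t'j) = (xx'+tt') + (xt'+tx')j`. -/
def hmul (a b : Hyp) : Hyp := (a.1 * b.1 + a.2 * b.2, a.1 * b.2 + a.2 * b.1)

/-- Hyperbolic conjugation: `conj (x+tj) = x - tj`. -/
def hconj (a : Hyp) : Hyp := (a.1, -a.2)

/-- Invertibility of a hyperbolic number: `x² ≠ t²`. -/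
def IsInv (a : Hyp) : Prop := a.1 ^ 2 ≠ a.2 ^ 2

/-- Hyperbolic inverse `z⁻¹ = z̄ / |z|²` with `|z|² = x² - t²`. -/
def hinv (a : Hyp) : Hyp := (a.1 / (a.1 ^ 2 - a.2 ^ 2), -a.2 / (a.1 ^ 2 - a.2 ^ 2))

/-- Hyperbolic division. -/
def hdiv (a b : Hyp) : Hyp := hmul a (hinv b)

/-- Partial derivative in the first (`x`) variable. -/
def pdx (g : Hyp → ℝ) (p : Hyp) : ℝ := deriv (fun s => g (s, p.2)) p.1

/-- Partial derivative in the second (`t`) variable. -/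
def pdt (g : Hyp → ℝ) (p : Hyp) : ℝ := deriv (fun s => g (p.1, s)) p.2

/-- The wave operator `□g = g_xx - g_tt`. -/
def waveOp (g : Hyp → ℝ) (p : Hyp) : ℝ := pdx (pdx g) p - pdt (pdt g) p

/-- `w_z = ½(∂_x + j ∂_t) w = ½((u_x+v_t) + (v_x+u_t)j)` for a 𝔻-valued `w = u + jv`. -/
def dz (w : Hyp → Hyp) (p : Hyp) : Hyp :=
  ((pdx (fun q => (w q).1) p + pdt (fun q => (w q).2) p) / 2,
   (pdx (fun q => (w q).2) p + pdt (fun q => (w q).1) p) / 2)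

/-- `w_z̄ = ½(∂_x - j ∂_t) w = ½((u_x-v_t) + (v_x-u_t)j)` for a 𝔻-valued `w = u + jv`. -/
def dzbar (w : Hyp → Hyp) (p : Hyp) : Hyp :=
  ((pdx (fun q => (w q).1) p - pdt (fun q => (w q).2) p) / 2,
   (pdx (fun q => (w q).2) p - pdt (fun q => (w q).1) p) / 2)

/-- `f_z = ½(f_x + j f_t)` for a real-valued `f`. -/
def rz (f : Hyp → ℝ) (p : Hyp) : Hyp := (pdx f p / 2, pdt f p / 2)

/-- `f_z̄ = ½(f_x - j f_t)` for a real-valued `f`. -/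
def rzbar (f : Hyp → ℝ) (p : Hyp) : Hyp := (pdx f p / 2, -(pdt f p) / 2)

/-- 𝔻-differentiability at `z₀`: the difference quotient `(f z - f z₀)·(z - z₀)⁻¹`
tends to `d` as `z → z₀` through points with `z - z₀` invertible. -/
def HasHDerivAt (f : Hyp → Hyp) (d : Hyp) (z₀ : Hyp) : Prop :=
  Filter.Tendsto (fun z => hmul (f z - f z₀) (hinv (z - z₀)))
    (nhdsWithin z₀ {z | IsInv (z - z₀)}) (nhds d)

/-- `F Ḡ - F̄ G`. -/
def pairDenom (F G : Hyp → Hyp) (z : Hyp) : Hyp :=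
  hmul (F z) (hconj (G z)) - hmul (hconj (F z)) (G z)

/-- Characteristic coefficient `a_(F,G) = -(F̄ G_z̄ - F_z̄ Ḡ)/(F Ḡ - F̄ G)`. -/
def aFG (F G : Hyp → Hyp) (z : Hyp) : Hyp :=
  - hdiv (hmul (hconj (F z)) (dzbar G z) - hmul (dzbar F z) (hconj (G z))) (pairDenom F G z)

/-- Characteristic coefficient `b_(F,G) = (F G_z̄ - F_z̄ G)/(F Ḡ - F̄ G)`. -/
def bFG (F G : Hyp → Hyp) (z : Hyp) : Hyp :=
  hdiv (hmul (F z) (dzbar G z) - hmul (dzbar F z) (G z)) (pairDenom F G z)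

/-- Characteristic coefficient `A_(F,G) = -(F̄ G_z - F_z Ḡ)/(F Ḡ - F̄ G)`. -/
def AFG (F G : Hyp → Hyp) (z : Hyp) : Hyp :=
  - hdiv (hmul (hconj (F z)) (dz G z) - hmul (dz F z) (hconj (G z))) (pairDenom F G z)

/-- Characteristic coefficient `B_(F,G) = (F G_z - F_z G)/(F Ḡ - F̄ G)`. -/
def BFG (F G : Hyp → Hyp) (z : Hyp) : Hyp :=
  hdiv (hmul (F z) (dz G z) - hmul (dz F z) (G z)) (pairDenom F G z)

/-- A generating pair on `Ω`: twice continuously differentiable `F, G` with `Im(F̄G) ≠ 0`. -/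
def IsGenPair (F G : Hyp → Hyp) (Ω : Set Hyp) : Prop :=
  ContDiffOn ℝ 2 F Ω ∧ ContDiffOn ℝ 2 G Ω ∧ ∀ z ∈ Ω, him (hmul (hconj (F z)) (G z)) ≠ 0

/-- The idempotent `e₁ = (1+j)/2`. -/
def e1 : Hyp := (1/2, 1/2)

/-- The idempotent `e₂ = (1-j)/2`. -/
def e2 : Hyp := (1/2, -1/2)

/-- Contour integral `∮_{∂R} h dz` over the counterclockwise boundary of the rectangle
`[x₁,x₂] × [t₁,t₂]`, with hyperbolic multiplication (`dz = dx` on horizontal sides,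
`dz = j dt` on vertical sides). -/
def rectContourInt (h : Hyp → Hyp) (x₁ x₂ t₁ t₂ : ℝ) : Hyp :=
  ((∫ x in x₁..x₂, h (x, t₁)) - ∫ x in x₁..x₂, h (x, t₂)) +
    hmul hj ((∫ t in t₁..t₂, h (x₂, t)) - ∫ t in t₁..t₂, h (x₁, t))

/-- Integral `∫_{[z₀,z]} h dζ` along the straight segment from `z₀` to `z`,
with hyperbolic multiplication. -/
def segInt (h : Hyp → Hyp) (z₀ z : Hyp) : Hyp :=
  ∫ s in (0:ℝ)..1, hmul (h (z₀ + s • (z - z₀))) (z - z₀)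

/-- Natural powers in 𝔻. -/
def hpow (a : Hyp) : ℕ → Hyp
  | 0 => (1, 0)
  | n + 1 => hmul a (hpow a n)

/-- Integer powers in 𝔻 (for invertible base). -/
def hzpow (a : Hyp) : ℤ → Hyp
  | Int.ofNat n => hpow a n
  | Int.negSucc n => hinv (hpow a (n + 1))

/-! ### Auxiliary lemmas -/

lemma hmul_comm' (a b : Hyp) : hmul a b = hmul b a := by
  refine Prod.ext ?_ ?_ <;> simp [hmul] <;> ring

lemma hmul_assoc' (a b c : Hyp) : hmul (hmul a b) c = hmul a (hmul b c) := by
  refine Prod.ext ?_ ?_ <;> simp [hmul] <;> ring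

lemma hmul_add' (a b c : Hyp) : hmul a (b + c) = hmul a b + hmul a c := by
  refine Prod.ext ?_ ?_ <;> simp [hmul] <;> ring

lemma one_hmul' (a : Hyp) : hmul (1, 0) a = a := by
  refine Prod.ext ?_ ?_ <;> simp [hmul]

lemma hmul_hinv' (a : Hyp) (ha : IsInv a) : hmul a (hinv a) = (1, 0) := by
  have h : a.1 ^ 2 - a.2 ^ 2 ≠ 0 := sub_ne_zero.mpr ha
  refine Prod.ext ?_ ?_ <;> simp [hmul, hinv] <;> field_simp <;> ring

lemma hmul_left_cancel' {D x y : Hyp} (hD : IsInv D) (h : hmul D x = hmul D y) : x = y := by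
  have h2 := congrArg (hmul (hinv D)) h
  rwa [← hmul_assoc', ← hmul_assoc', hmul_comm' (hinv D) D, hmul_hinv' D hD,
    one_hmul', one_hmul'] at h2

lemma hmul_hdiv_cancel' (D X : Hyp) (hD : IsInv D) : hmul D (hdiv X D) = X := by
  rw [hdiv, hmul_comm' D, hmul_assoc', hmul_comm' (hinv D) D, hmul_hinv' D hD]
  refine Prod.ext ?_ ?_ <;> simp [hmul]

lemma hmul_neg' (a b : Hyp) : hmul (-a) b = -(hmul a b) := by
  refine Prod.ext ?_ ?_ <;> simp [hmul] <;> ring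

lemma pairDenom_isInv (F G : Hyp → Hyp) (z : Hyp)
    (hc : (F z).1 * (G z).2 - (F z).2 * (G z).1 ≠ 0) : IsInv (pairDenom F G z) := by
  simp only [IsInv, pairDenom, hmul, hconj, Prod.fst_sub, Prod.snd_sub]
  intro h
  apply hc
  nlinarith [sq_nonneg ((F z).1 * (G z).2 - (F z).2 * (G z).1)]

lemma key_both (f g df dg : Hyp) (hD : IsInv (hmul f (hconj g) - hmul (hconj f) g)) :
    (hmul (- hdiv (hmul (hconj f) dg - hmul df (hconj g)) (hmul f (hconj g) - hmul (hconj f) g)) f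
      + hmul (hdiv (hmul f dg - hmul df g) (hmul f (hconj g) - hmul (hconj f) g)) (hconj f) = df)
    ∧
    (hmul (- hdiv (hmul (hconj f) dg - hmul df (hconj g)) (hmul f (hconj g) - hmul (hconj f) g)) g
      + hmul (hdiv (hmul f dg - hmul df g) (hmul f (hconj g) - hmul (hconj f) g)) (hconj g) = dg) := by
  set D := hmul f (hconj g) - hmul (hconj f) g with hDdef
  have hcancel1 := hmul_hdiv_cancel' D (hmul (hconj f) dg - hmul df (hconj g)) hD
  have hcancel2 := hmul_hdiv_cancel' D (hmul f dg - hmul df g) hD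
  constructor
  · apply hmul_left_cancel' hD
    rw [hmul_add', ← hmul_assoc', ← hmul_assoc', hmul_comm' D (- hdiv _ _), hmul_neg',
      hmul_comm' (hdiv _ _) D, hcancel1, hcancel2, hmul_neg']
    refine Prod.ext ?_ ?_ <;>
      simp [hDdef, hmul, hconj, Prod.fst_sub, Prod.snd_sub] <;> ring
  · apply hmul_left_cancel' hD
    rw [hmul_add', ← hmul_assoc', ← hmul_assoc', hmul_comm' D (- hdiv _ _), hmul_neg',
      hmul_comm' (hdiv _ _) D, hcancel1, hcancel2, hmul_neg']
    refine Prod.ext ?_ ?_ <;>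
      simp [hDdef, hmul, hconj, Prod.fst_sub, Prod.snd_sub] <;> ring

lemma lineX_diff {g : Hyp → ℝ} {p : Hyp} (hg : DifferentiableAt ℝ g p) :
    DifferentiableAt ℝ (fun s : ℝ => g (s, p.2)) p.1 :=
  hg.comp p.1 (differentiableAt_id.prodMk (differentiableAt_const _))

lemma lineT_diff {g : Hyp → ℝ} {p : Hyp} (hg : DifferentiableAt ℝ g p) :
    DifferentiableAt ℝ (fun s : ℝ => g (p.1, s)) p.2 :=
  hg.comp p.2 ((differentiableAt_const _).prodMk differentiableAt_id)

lemma pdx_add {g f : Hyp → ℝ} {p : Hyp} (hg : DifferentiableAt ℝ g p)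
    (hf : DifferentiableAt ℝ f p) :
    pdx (fun q => g q + f q) p = pdx g p + pdx f p :=
  deriv_add (lineX_diff hg) (lineX_diff hf)

lemma pdt_add {g f : Hyp → ℝ} {p : Hyp} (hg : DifferentiableAt ℝ g p)
    (hf : DifferentiableAt ℝ f p) :
    pdt (fun q => g q + f q) p = pdt g p + pdt f p :=
  deriv_add (lineT_diff hg) (lineT_diff hf)

lemma pdx_mul {g f : Hyp → ℝ} {p : Hyp} (hg : DifferentiableAt ℝ g p)
    (hf : DifferentiableAt ℝ f p) :
    pdx (fun q => g q * f q) p = pdx g p * f p + g p * pdx f p :=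
  deriv_mul (lineX_diff hg) (lineX_diff hf)

lemma pdt_mul {g f : Hyp → ℝ} {p : Hyp} (hg : DifferentiableAt ℝ g p)
    (hf : DifferentiableAt ℝ f p) :
    pdt (fun q => g q * f q) p = pdt g p * f p + g p * pdt f p :=
  deriv_mul (lineT_diff hg) (lineT_diff hf)

/-- for a generating pair `(F,G)` on an open `Ω` and C¹ real functions
`φ, ψ`, the function `w = φF + ψG` satisfies the hyperbolic Vekua equation
`w_z̄ = a_(F,G)w + b_(F,G)w̄` on `Ω` iff `φ_z̄·F + ψ_z̄·G = 0` on `Ω`. -/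
theorem vekua_iff_second_kind (Ω : Set Hyp) (hΩ : IsOpen Ω) (F G : Hyp → Hyp)
    (hFG : IsGenPair F G Ω)
    (φ ψ : Hyp → ℝ) (hφ : ContDiffOn ℝ 1 φ Ω) (hψ : ContDiffOn ℝ 1 ψ Ω)
    (w : Hyp → Hyp) (hw : ∀ z, w z = φ z • F z + ψ z • G z) :
    (∀ z ∈ Ω, dzbar w z = hmul (aFG F G z) (w z) + hmul (bFG F G z) (hconj (w z))) ↔
    (∀ z ∈ Ω, hmul (rzbar φ z) (F z) + hmul (rzbar ψ z) (G z) = 0) := by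
  refine forall₂_congr fun z hz => ?_
  have hmem : Ω ∈ nhds z := hΩ.mem_nhds hz
  have hc : (F z).1 * (G z).2 - (F z).2 * (G z).1 ≠ 0 := by
    have h := hFG.2.2 z hz
    simp only [him, hmul, hconj] at h
    intro h0; apply h; linarith
  -- differentiability facts
  have hφz : DifferentiableAt ℝ φ z := (hφ.differentiableOn one_ne_zero).differentiableAt hmem
  have hψz : DifferentiableAt ℝ ψ z := (hψ.differentiableOn one_ne_zero).differentiableAt hmem
  have hFz : DifferentiableAt ℝ F z := (hFG.1.differentiableOn two_ne_zero).differentiableAt hmem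
  have hGz : DifferentiableAt ℝ G z := (hFG.2.1.differentiableOn two_ne_zero).differentiableAt hmem
  have hF1 := hFz.fst
  have hF2 := hFz.snd
  have hG1 := hGz.fst
  have hG2 := hGz.snd
  -- component functions of w
  have hw1 : (fun q => (w q).1) = fun q => φ q * (F q).1 + ψ q * (G q).1 := by
    funext q; rw [hw q]; simp
  have hw2 : (fun q => (w q).2) = fun q => φ q * (F q).2 + ψ q * (G q).2 := by
    funext q; rw [hw q]; simp
  -- product rules
  have e1 : pdx (fun q => (w q).1) z =
      pdx φ z * (F z).1 + φ z * pdx (fun q => (F q).1) z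
        + (pdx ψ z * (G z).1 + ψ z * pdx (fun q => (G q).1) z) := by
    rw [hw1, pdx_add (g := fun q => φ q * (F q).1) (f := fun q => ψ q * (G q).1) (hφz.mul hF1) (hψz.mul hG1), pdx_mul hφz hF1, pdx_mul hψz hG1]
  have e2 : pdx (fun q => (w q).2) z =
      pdx φ z * (F z).2 + φ z * pdx (fun q => (F q).2) z
        + (pdx ψ z * (G z).2 + ψ z * pdx (fun q => (G q).2) z) := by
    rw [hw2, pdx_add (g := fun q => φ q * (F q).2) (f := fun q => ψ q * (G q).2) (hφz.mul hF2) (hψz.mul hG2), pdx_mul hφz hF2, pdx_mul hψz hG2]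
  have e3 : pdt (fun q => (w q).1) z =
      pdt φ z * (F z).1 + φ z * pdt (fun q => (F q).1) z
        + (pdt ψ z * (G z).1 + ψ z * pdt (fun q => (G q).1) z) := by
    rw [hw1, pdt_add (g := fun q => φ q * (F q).1) (f := fun q => ψ q * (G q).1) (hφz.mul hF1) (hψz.mul hG1), pdt_mul hφz hF1, pdt_mul hψz hG1]
  have e4 : pdt (fun q => (w q).2) z =
      pdt φ z * (F z).2 + φ z * pdt (fun q => (F q).2) z
        + (pdt ψ z * (G z).2 + ψ z * pdt (fun q => (G q).2) z) := by
    rw [hw2, pdt_add (g := fun q => φ q * (F q).2) (f := fun q => ψ q * (G q).2) (hφz.mul hF2) (hψz.mul hG2), pdt_mul hφz hF2, pdt_mul hψz hG2]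
  -- splitting of dzbar w
  have hsplit : dzbar w z =
      (hmul (rzbar φ z) (F z) + hmul (rzbar ψ z) (G z))
        + (φ z • dzbar F z + ψ z • dzbar G z) := by
    refine Prod.ext ?_ ?_ <;>
      simp only [dzbar, rzbar, hmul, e1, e2, e3, e4, Prod.fst_add, Prod.snd_add,
        Prod.smul_fst, Prod.smul_snd, smul_eq_mul] <;> ring
  -- the generating pair satisfies the Vekua equation
  have hD : IsInv (pairDenom F G z) := pairDenom_isInv F G z hc
  have hkey := key_both (F z) (G z) (dzbar F z) (dzbar G z) hD
  have hkF : hmul (aFG F G z) (F z) + hmul (bFG F G z) (hconj (F z)) = dzbar F z := hkey.1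
  have hkG : hmul (aFG F G z) (G z) + hmul (bFG F G z) (hconj (G z)) = dzbar G z := hkey.2
  -- the right-hand side of the Vekua equation
  have hRHS : hmul (aFG F G z) (w z) + hmul (bFG F G z) (hconj (w z)) =
      φ z • dzbar F z + ψ z • dzbar G z := by
    rw [← hkF, ← hkG, hw z]
    refine Prod.ext ?_ ?_ <;>
      simp only [hmul, hconj, Prod.fst_add, Prod.snd_add, Prod.smul_fst, Prod.smul_snd,
        smul_eq_mul] <;> ring
  rw [hsplit, hRHS]
  exact add_eq_right
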